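/- Let a, b, c, d ∈ R = ℂ[s,t,u] be homogeneous of degree n ≥ 1 with no nonconstant common divisor (gcd(a,b,c,d) = 1), and set I = ⟨a,b,c,d⟩ ⊆ R. Assume a, b, c, d have at least one common zero in ℂ³∖{0}. Then the following are equivalent: (1) Syz(a,b,c,d) is a free R-module; (2) the maximal ideal ⟨s,t,u⟩ is not an associated prime of the R-module R/I (i.e., ⟨s,t,u⟩ is not the annihilator of any element of R/I); (3) the colon ideal I : ⟨s,t,u⟩ equals I (i.e., I is saturated with respect to ⟨s,t,u⟩). -/
import Mathlib


open MvPolynomial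

/-- The syzygy module `Syz(a,b,c,d) = {(A,B,C,D) ∈ R⁴ : Aa + Bb + Cc + Dd = 0}`
as an `R`-submodule of `R⁴`, `R = ℂ[s,t,u]`. -/
noncomputable def syzygyModule (a b c d : MvPolynomial (Fin 3) ℂ) :
    Submodule (MvPolynomial (Fin 3) ℂ) (Fin 4 → MvPolynomial (Fin 3) ℂ) where
  carrier := {A | A 0 * a + A 1 * b + A 2 * c + A 3 * d = 0}
  add_mem' := by
    intro A B hA hB
    simp only [Set.mem_setOf_eq, Pi.add_apply] at *
    linear_combination hA + hB
  zero_mem' := by simp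
  smul_mem' := by
    intro r A hA
    simp only [Set.mem_setOf_eq, Pi.smul_apply, smul_eq_mul] at *
    linear_combination r * hA

noncomputable section SyzProofAll
open Finset

local notation "R3" => MvPolynomial (Fin 3) ℂ

/-- generic substitution lemma -/
lemma syz_sub_aeval_mem (b : Fin 3 → R3) (J : Ideal R3) (hb : ∀ i, X i - b i ∈ J)
    (f : R3) : f - aeval b f ∈ J := by
  induction f using MvPolynomial.induction_on with
  | C a => simp [aeval_C, algebraMap_eq]
  | add p q hp hq =>
      have := J.add_mem hp hq
      have h2 : p + q - aeval b (p + q) = (p - aeval b p) + (q - aeval b q) := by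
        rw [map_add]; ring
      rw [h2]; exact this
  | mul_X p i hp =>
      have h2 : p * X i - aeval b (p * X i) = p * (X i - b i) + (p - aeval b p) * b i := by
        rw [map_mul, aeval_X]; ring
      rw [h2]
      exact J.add_mem (Ideal.mul_mem_left _ _ (hb i)) (Ideal.mul_mem_right _ _ hp)

def syzKill (j : Fin 3) : R3 →ₐ[ℂ] R3 :=
  aeval (fun i => if i = j then (0 : R3) else X i)

lemma syz_X_dvd_sub_kill (j : Fin 3) (f : R3) : X j ∣ f - syzKill j f := by
  rw [← Ideal.mem_span_singleton]
  exact syz_sub_aeval_mem _ _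
    (fun i => by
      by_cases hij : i = j
      · subst hij; simpa using Ideal.subset_span (Set.mem_singleton _)
      · simp [hij])
    f

@[simp] lemma syzKill_X_self (j : Fin 3) : syzKill j (X j) = 0 := by
  simp [syzKill]

@[simp] lemma syzKill_X_ne {i j : Fin 3} (h : i ≠ j) : syzKill j (X i) = X i := by
  simp [syzKill, h]

lemma syz_dvd_of_kill_eq_zero {j : Fin 3} {f : R3}
    (h : syzKill j f = 0) : X j ∣ f := by
  have h2 := syz_X_dvd_sub_kill j f
  rw [h, sub_zero] at h2
  exact h2

/-- Koszul relation for two distinct variables. -/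
lemma syz_koszul2 {i j : Fin 3} (hij : i ≠ j) {g h : R3} (e : X i * g = X j * h) :
    ∃ w, g = X j * w ∧ h = X i * w := by
  have hk : syzKill j g = 0 := by
    have := congrArg (syzKill j) e
    rw [map_mul, map_mul, syzKill_X_self, syzKill_X_ne hij, zero_mul] at this
    rcases mul_eq_zero.mp this with h1 | h1
    · exact absurd h1 (X_ne_zero i)
    · exact h1
  obtain ⟨w, hw⟩ := syz_dvd_of_kill_eq_zero hk
  refine ⟨w, hw, ?_⟩
  have : X j * (X i * w) = X j * h := by rw [← e, hw]; ring
  exact (mul_left_cancel₀ (X_ne_zero j) this).symm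

/-- Koszul relation for the three variables. -/
lemma syz_koszul3 {f g h : R3} (e : X 2 * f = X 1 * g - X 0 * h) :
    ∃ p q r : R3, f = X 1 * p + X 0 * q ∧ g = X 2 * p + X 0 * r ∧ h = X 1 * r - X 2 * q := by
  have e1 : X 1 * syzKill 2 g = X 0 * syzKill 2 h := by
    have := congrArg (syzKill 2) e
    rw [map_sub, map_mul, map_mul, map_mul, syzKill_X_self,
      syzKill_X_ne (show (1:Fin 3) ≠ 2 by decide), syzKill_X_ne (show (0:Fin 3) ≠ 2 by decide),
      zero_mul] at this
    linear_combination -this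
  obtain ⟨w, hw1, hw2⟩ := syz_koszul2 (show (1:Fin 3) ≠ (0:Fin 3) by decide) e1
  -- syzKill 2 g = X 0 * w, syzKill 2 h = X 1 * w
  obtain ⟨p, hp⟩ : X 2 ∣ g - X 0 * w := by
    have := syz_X_dvd_sub_kill 2 g
    rwa [hw1] at this
  -- g = X 0 * w + X 2 * p
  have hg : g = X 2 * p + X 0 * w := by linear_combination hp
  -- X 0 * (h - X 1 * w) = X 2 * (X 1 * p - f)
  have e2 : X 0 * (h - X 1 * w) = X 2 * (X 1 * p - f) := by linear_combination e + X 1 * hg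
  obtain ⟨v, hv1, hv2⟩ := syz_koszul2 (show (0:Fin 3) ≠ (2:Fin 3) by decide) e2
  exact ⟨p, -v, w, by linear_combination -hv2, hg, by linear_combination hv1⟩

lemma syz_cc_zero_of_mem {f : R3} (h : f ∈ Ideal.span {X 0, X 1, X 2}) :
    constantCoeff f = 0 := by
  have hk : Ideal.span ({X 0, X 1, X 2} : Set R3) ≤ RingHom.ker (constantCoeff (σ := Fin 3)) := by
    rw [Ideal.span_le]
    rintro x (rfl | rfl | rfl) <;> simp [RingHom.mem_ker]
  exact hk h

lemma syz_m_rep {f : R3} (h : f ∈ Ideal.span ({X 0, X 1, X 2} : Set R3)) :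
    ∃ α β γ : R3, f = X 0 * α + X 1 * β + X 2 * γ := by
  rw [Ideal.mem_span_insert] at h
  obtain ⟨α, z, hz, rfl⟩ := h
  rw [Ideal.mem_span_pair] at hz
  obtain ⟨β, γ, rfl⟩ := hz
  exact ⟨α, β, γ, by ring⟩

lemma syz_sub_aeval_memB (b : Fin 3 → R3) (J : Ideal R3) (hb : ∀ i, X i - b i ∈ J)
    (f : R3) : f - aeval b f ∈ J := by
  induction f using MvPolynomial.induction_on with
  | C a => simp [aeval_C, algebraMap_eq]
  | add p q hp hq =>
      have := J.add_mem hp hq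
      have h2 : p + q - aeval b (p + q) = (p - aeval b p) + (q - aeval b q) := by
        rw [map_add]; ring
      rw [h2]; exact this
  | mul_X p i hp =>
      have h2 : p * X i - aeval b (p * X i) = p * (X i - b i) + (p - aeval b p) * b i := by
        rw [map_mul, aeval_X]; ring
      rw [h2]
      exact J.add_mem (Ideal.mul_mem_left _ _ (hb i)) (Ideal.mul_mem_right _ _ hp)

lemma syz_sub_C_mem (f : R3) :
    f - C (constantCoeff f) ∈ Ideal.span ({X 0, X 1, X 2} : Set R3) := by
  have := syz_sub_aeval_memB (fun _ => 0) (Ideal.span ({X 0, X 1, X 2} : Set R3))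
    (fun i => by
      fin_cases i <;>
        simpa using Ideal.subset_span (by simp : _ ∈ ({X 0, X 1, X 2} : Set R3)))
    f
  have h0 : (aeval (fun _ => (0:R3)) f) = C (constantCoeff f) := by
    rw [show (fun _ : Fin 3 => (0:R3)) = (0 : Fin 3 → R3) from rfl, aeval_zero, algebraMap_eq]
  rwa [h0] at this

lemma syz_sum_hc {f : R3} {N : ℕ} (h : f.totalDegree ≤ N) :
    ∑ w ∈ range (N + 1), homogeneousComponent w f = f := by
  conv_rhs => rw [← sum_homogeneousComponent (φ := f)]
  symm
  apply Finset.sum_subset (Finset.range_subset_range.mpr (show f.totalDegree + 1 ≤ N + 1 by omega))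
  intro w hw hnw
  apply homogeneousComponent_eq_zero
  simp only [Finset.mem_range, not_lt] at hw hnw
  omega

lemma syz_hc_mul {g : R3} {dg : ℕ} (hg : g.IsHomogeneous dg) (f : R3) (k : ℕ) :
    homogeneousComponent (k + dg) (f * g) = homogeneousComponent k f * g := by
  have hfg : f * g = ∑ w ∈ range (f.totalDegree + 1), homogeneousComponent w f * g := by
    rw [← Finset.sum_mul, sum_homogeneousComponent]
  rw [hfg, map_sum]
  have hterm : ∀ w : ℕ, homogeneousComponent (k + dg) (homogeneousComponent w f * g)
      = if k + dg = w + dg then homogeneousComponent w f * g else 0 := by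
    intro w
    exact homogeneousComponent_of_mem
      ((mem_homogeneousSubmodule _ _).mpr ((homogeneousComponent_isHomogeneous w f).mul hg))
  simp_rw [hterm, Nat.add_right_cancel_iff]
  rw [Finset.sum_ite_eq (range (f.totalDegree + 1)) k (fun w => homogeneousComponent w f * g)]
  by_cases hk : k ∈ range (f.totalDegree + 1)
  · rw [if_pos hk]
  · rw [if_neg hk, homogeneousComponent_eq_zero, zero_mul]
    simp only [Finset.mem_range, not_lt] at hk; omega

lemma syz_hc_mul_lt {g : R3} {dg : ℕ} (hg : g.IsHomogeneous dg) (f : R3) {k : ℕ}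
    (hk : k < dg) : homogeneousComponent k (f * g) = 0 := by
  have hfg : f * g = ∑ w ∈ range (f.totalDegree + 1), homogeneousComponent w f * g := by
    rw [← Finset.sum_mul, sum_homogeneousComponent]
  rw [hfg, map_sum]
  apply Finset.sum_eq_zero
  intro w _
  rw [homogeneousComponent_of_mem
    ((mem_homogeneousSubmodule _ _).mpr ((homogeneousComponent_isHomogeneous w f).mul hg)),
    if_neg (by omega)]

lemma syz_mem_span4 {x a b c d : R3} :
    x ∈ Ideal.span ({a, b, c, d} : Set R3) ↔
      ∃ A : Fin 4 → R3, A 0 * a + A 1 * b + A 2 * c + A 3 * d = x := by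
  have hset : ({a, b, c, d} : Set R3) = Set.range ![a, b, c, d] := by
    ext y
    simp only [Set.mem_insert_iff, Set.mem_singleton_iff, Set.mem_range]
    constructor
    · rintro (rfl | rfl | rfl | rfl)
      exacts [⟨0, rfl⟩, ⟨1, rfl⟩, ⟨2, rfl⟩, ⟨3, rfl⟩]
    · rintro ⟨i, rfl⟩
      fin_cases i <;> simp
  rw [hset, Ideal.mem_span_range_iff_exists_fun]
  constructor
  · rintro ⟨A, hA⟩; exact ⟨A, by simpa [Fin.sum_univ_four] using hA⟩
  · rintro ⟨A, hA⟩; exact ⟨A, by simpa [Fin.sum_univ_four] using hA⟩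

def syzDot (a b c d : R3) (A : Fin 4 → R3) : R3 := A 0 * a + A 1 * b + A 2 * c + A 3 * d

lemma syz_mem_iff (a b c d : R3) {A : Fin 4 → R3} :
    A ∈ syzygyModule a b c d ↔ syzDot a b c d A = 0 := Iff.rfl

lemma syz_hc_mul' {g : R3} {dgg : ℕ} (hg : g.IsHomogeneous dgg) (f : R3) (w : ℕ) :
    homogeneousComponent w (f * g)
      = (if dgg ≤ w then homogeneousComponent (w - dgg) f else 0) * g := by
  by_cases hle : dgg ≤ w
  · rw [if_pos hle, ← syz_hc_mul hg f (w - dgg), Nat.sub_add_cancel hle]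
  · rw [if_neg hle, zero_mul, syz_hc_mul_lt hg f (by omega)]

lemma syz_hc_self {f : R3} {w : ℕ} (h : f.IsHomogeneous w) :
    homogeneousComponent w f = f := by
  rw [homogeneousComponent_of_mem ((mem_homogeneousSubmodule _ _).mpr h), if_pos rfl]

lemma syz_homog_transport {f : R3} {w w' : ℕ} (h : f.IsHomogeneous w) (hww : w = w') :
    f.IsHomogeneous w' := hww ▸ h

lemma syz_hcVec_mem {n : ℕ} {a b c d : R3}
    (hha : a.IsHomogeneous n) (hhb : b.IsHomogeneous n)
    (hhc : c.IsHomogeneous n) (hhd : d.IsHomogeneous n)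
    {A : Fin 4 → R3} (hA : A ∈ syzygyModule a b c d) (w : ℕ) :
    (fun l => homogeneousComponent w (A l)) ∈ syzygyModule a b c d := by
  rw [syz_mem_iff]
  have hdot : syzDot a b c d (fun l => homogeneousComponent w (A l))
      = homogeneousComponent (w + n) (syzDot a b c d A) := by
    simp only [syzDot, map_add, syz_hc_mul hha, syz_hc_mul hhb, syz_hc_mul hhc, syz_hc_mul hhd]
  rw [hdot, (syz_mem_iff a b c d).mp hA, map_zero]

/-- a homogeneous polynomial of positive degree decomposes along the variables with
homogeneous coefficients (degree one less). -/
lemma syz_hom_decomp {f : R3} {k : ℕ} (hf : f.IsHomogeneous (k + 1))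
    (hmem : f ∈ Ideal.span ({X 0, X 1, X 2} : Set R3)) :
    ∃ α β γ : R3, f = X 0 * α + X 1 * β + X 2 * γ ∧
      α.IsHomogeneous k ∧ β.IsHomogeneous k ∧ γ.IsHomogeneous k := by
  obtain ⟨α', β', γ', hf'⟩ := syz_m_rep hmem
  have hX : ∀ i : Fin 3, (X i : R3).IsHomogeneous 1 := fun i => isHomogeneous_X _ _
  have h1 : homogeneousComponent (k + 1) f = f := syz_hc_self hf
  have h2 : f = homogeneousComponent k α' * X 0 + homogeneousComponent k β' * X 1
      + homogeneousComponent k γ' * X 2 := by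
    conv_lhs => rw [← h1, hf']
    rw [map_add, map_add, mul_comm (X 0 : R3) α', mul_comm (X 1 : R3) β',
      mul_comm (X 2 : R3) γ', syz_hc_mul (hX 0), syz_hc_mul (hX 1), syz_hc_mul (hX 2)]
  exact ⟨homogeneousComponent k α', homogeneousComponent k β', homogeneousComponent k γ',
    by rw [h2]; ring, homogeneousComponent_isHomogeneous _ _,
    homogeneousComponent_isHomogeneous _ _, homogeneousComponent_isHomogeneous _ _⟩

section abcd

variable (a b c d : R3)

variable {a b c d}

lemma syzDot_smul (r : R3) (A : Fin 4 → R3) :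
    syzDot a b c d (r • A) = r * syzDot a b c d A := by
  simp only [syzDot, Pi.smul_apply, smul_eq_mul]; ring

lemma syzDot_add (A B : Fin 4 → R3) :
    syzDot a b c d (A + B) = syzDot a b c d A + syzDot a b c d B := by
  simp only [syzDot, Pi.add_apply]; ring

lemma syzDot_mem_span (A : Fin 4 → R3) :
    syzDot a b c d A ∈ Ideal.span ({a, b, c, d} : Set R3) :=
  syz_mem_span4.mpr ⟨A, rfl⟩

/-- Pair-regularity: if `X i • A = X j • B` with `A, B` syzygies, `i ≠ j`,
then `A = X j • W` for a syzygy `W`. -/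
lemma syz_reg2 {i j : Fin 3} (hij : i ≠ j) {A B : Fin 4 → R3}
    (hA : A ∈ syzygyModule a b c d) (h : (X i : R3) • A = (X j : R3) • B) :
    ∃ W ∈ syzygyModule a b c d, A = (X j : R3) • W := by
  have hcomp : ∀ l : Fin 4, ∃ w, A l = X j * w := by
    intro l
    have := congrFun h l
    simp only [Pi.smul_apply, smul_eq_mul] at this
    obtain ⟨w, hw1, _⟩ := syz_koszul2 hij this
    exact ⟨w, hw1⟩
  choose w hw using hcomp
  have hAW : A = (X j : R3) • w := by funext l; simpa using hw l
  refine ⟨w, ?_, hAW⟩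
  rw [syz_mem_iff]
  have : syzDot a b c d A = X j * syzDot a b c d w := by rw [hAW, syzDot_smul]
  rw [(syz_mem_iff a b c d).mp hA] at this
  exact (mul_eq_zero.mp this.symm).resolve_left (X_ne_zero j)

lemma syz_mem_colon_m {I : Ideal R3} {x : R3} (h0 : x * X 0 ∈ I) (h1 : x * X 1 ∈ I)
    (h2 : x * X 2 ∈ I) : x ∈ I.colon (Ideal.span ({X 0, X 1, X 2} : Set R3)) := by
  rw [Submodule.mem_colon]
  intro p hp
  induction hp using Submodule.span_induction with
  | mem y hy =>
      rcases hy with rfl | rfl | rfl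
      · exact h0
      · exact h1
      · exact h2
  | zero => simpa using I.zero_mem
  | add y z _ _ hy hz => rw [smul_add]; exact I.add_mem hy hz
  | smul r y _ hy =>
      rw [smul_comm]
      exact Ideal.mul_mem_left _ _ hy

/-- Components of an element killed by `X 2` modulo `(X 0, X 1)`. -/
lemma syz_pair_rep {f g h : R3} (e : X 2 * f = X 0 * g + X 1 * h) :
    ∃ α β, f = X 0 * α + X 1 * β := by
  set b : Fin 3 → R3 := fun i => if i = 2 then X 2 else 0 with hb
  have hker : ∀ p : R3, aeval b p = 0 → p ∈ Ideal.span ({X 0, X 1} : Set R3) := by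
    intro p hp
    have := syz_sub_aeval_mem b (Ideal.span ({X 0, X 1} : Set R3))
      (fun i => by
        fin_cases i
        · simpa [hb] using Ideal.subset_span (by simp : X 0 ∈ ({X 0, X 1} : Set R3))
        · simpa [hb] using Ideal.subset_span (by simp : X 1 ∈ ({X 0, X 1} : Set R3))
        · simp [hb]) p
    rwa [hp, sub_zero] at this
  have hb0 : b 0 = 0 := by simp [hb]
  have hb1 : b 1 = 0 := by simp [hb]
  have hb2 : b 2 = X 2 := by simp [hb]
  have hev : aeval b f = 0 := by
    have h2 := congrArg (aeval b) e
    rw [map_mul, map_add, map_mul, map_mul, aeval_X, aeval_X, aeval_X, hb0, hb1, hb2,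
      zero_mul, zero_mul, add_zero] at h2
    rcases mul_eq_zero.mp h2 with h' | h'
    · exact absurd h' (X_ne_zero 2)
    · exact h'
  obtain ⟨α, β, hαβ⟩ := Ideal.mem_span_pair.mp (hker f hev)
  exact ⟨α, β, by linear_combination -hαβ⟩

/-- Saturation-regularity: if `X 2 • M = X 0 • P + X 1 • Q` with all syzygies and
`I` saturated, then `M ∈ X 0 • Syz + X 1 • Syz`. -/
lemma syz_reg3
    (hsat : (Ideal.span ({a, b, c, d} : Set R3)).colon
        (Ideal.span ({X 0, X 1, X 2} : Set R3)) = Ideal.span ({a, b, c, d} : Set R3))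
    {M P Q : Fin 4 → R3}
    (hM : M ∈ syzygyModule a b c d) (hP : P ∈ syzygyModule a b c d)
    (hQ : Q ∈ syzygyModule a b c d) (h : (X 2 : R3) • M = (X 0 : R3) • P + (X 1 : R3) • Q) :
    ∃ A ∈ syzygyModule a b c d, ∃ B ∈ syzygyModule a b c d, M = (X 0 : R3) • A + (X 1 : R3) • B := by
  -- componentwise representation
  have hcomp : ∀ l : Fin 4, ∃ α β, M l = X 0 * α + X 1 * β := by
    intro l
    have := congrFun h l
    simp only [Pi.smul_apply, Pi.add_apply, smul_eq_mul] at this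
    exact syz_pair_rep this
  choose A0 B0 hAB using hcomp
  have hM0 : M = (X 0 : R3) • A0 + (X 1 : R3) • B0 := by
    funext l; simpa using hAB l
  -- dot products
  have hdot : X 0 * syzDot a b c d A0 + X 1 * syzDot a b c d B0 = 0 := by
    have := syz_mem_iff a b c d |>.mp hM
    rw [hM0, syzDot_add, syzDot_smul, syzDot_smul] at this
    exact this
  have e1 : X 1 * syzDot a b c d B0 = X 0 * (-syzDot a b c d A0) := by
    linear_combination hdot
  obtain ⟨hh, hB0dot, hA0dot⟩ := syz_koszul2 (show (1 : Fin 3) ≠ 0 by decide) e1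
  -- hB0dot : dot B0 = X 0 * hh ;  hA0dot : -dot A0 = X 1 * hh
  have hcomp2 : ∀ l : Fin 4, ∃ w, ((X 2:R3) • A0 - P) l = X 1 * w ∧ (Q - (X 2:R3) • B0) l = X 0 * w := by
    intro l
    have hl : X 0 * ((X 2:R3) • A0 - P) l = X 1 * (Q - (X 2:R3) • B0) l := by
      have h1 := congrFun h l
      have h2 := congrFun hM0 l
      simp only [Pi.smul_apply, Pi.add_apply, Pi.sub_apply, smul_eq_mul] at h1 h2 ⊢
      rw [h2] at h1
      linear_combination h1
    obtain ⟨w, hw1, hw2⟩ := syz_koszul2 (show (0 : Fin 3) ≠ 1 by decide) hl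
    exact ⟨w, hw1, hw2⟩
  choose D hD1 hD2 using hcomp2
  have hvec : (X 2:R3) • A0 - P = (X 1:R3) • D := by funext l; simpa using hD1 l
  have hDdot : syzDot a b c d D = -(X 2 * hh) := by
    have hd := congrArg (syzDot a b c d) hvec
    rw [syzDot_smul] at hd
    have hsub : syzDot a b c d ((X 2:R3) • A0 - P)
        = X 2 * syzDot a b c d A0 - syzDot a b c d P := by
      have : (X 2:R3) • A0 - P + P = (X 2:R3) • A0 := by abel
      have h3 := congrArg (syzDot a b c d) this
      rw [syzDot_add, syzDot_smul] at h3
      linear_combination h3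
    rw [hsub, syz_mem_iff a b c d |>.mp hP, sub_zero] at hd
    have hA0dot' : syzDot a b c d A0 = -(X 1 * hh) := by linear_combination -hA0dot
    rw [hA0dot'] at hd
    apply mul_left_cancel₀ (X_ne_zero 1)
    rw [← hd]; ring
  -- now hh • 𝔪 ⊆ I, so hh ∈ I by saturation
  have hhmem : hh ∈ Ideal.span ({a, b, c, d} : Set R3) := by
    rw [← hsat]
    apply syz_mem_colon_m
    · have := syzDot_mem_span (a := a) (b := b) (c := c) (d := d) B0
      rwa [hB0dot, mul_comm] at this
    · have := syzDot_mem_span (a := a) (b := b) (c := c) (d := d) A0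
      have h4 : X 1 * hh = -syzDot a b c d A0 := by linear_combination -hA0dot
      rw [show hh * X 1 = -(-(X 1 * hh)) by ring, h4, neg_neg]
      exact neg_mem this
    · have := syzDot_mem_span (a := a) (b := b) (c := c) (d := d) D
      rw [show hh * X 2 = -syzDot a b c d D by rw [hDdot]; ring]
      exact neg_mem this
  obtain ⟨Cv, hCv⟩ := syz_mem_span4.mp hhmem
  have hCdot : syzDot a b c d Cv = hh := hCv
  refine ⟨A0 + (X 1:R3) • Cv, ?_, B0 - (X 0:R3) • Cv, ?_, ?_⟩
  · rw [syz_mem_iff, syzDot_add, syzDot_smul, hCdot]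
    have : syzDot a b c d A0 = -(X 1 * hh) := by linear_combination -hA0dot
    rw [this]; ring
  · rw [syz_mem_iff]
    have hsub : syzDot a b c d (B0 - (X 0:R3) • Cv)
        = syzDot a b c d B0 - X 0 * syzDot a b c d Cv := by
      have : B0 - (X 0:R3) • Cv + (X 0:R3) • Cv = B0 := by abel
      have h3 := congrArg (syzDot a b c d) this
      rw [syzDot_add, syzDot_smul] at h3
      linear_combination h3
    rw [hsub, hCdot, hB0dot]; ring
  · rw [hM0]
    funext l
    simp only [Pi.add_apply, Pi.sub_apply, Pi.smul_apply, smul_eq_mul]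
    ring

end abcd

set_option maxHeartbeats 1000000 in
lemma syz_no_relation {n r : ℕ} {a b c d : R3}
    (hha : a.IsHomogeneous n) (hhb : b.IsHomogeneous n)
    (hhc : c.IsHomogeneous n) (hhd : d.IsHomogeneous n)
    (hsat : (Ideal.span ({a, b, c, d} : Set R3)).colon
        (Ideal.span ({X 0, X 1, X 2} : Set R3)) = Ideal.span ({a, b, c, d} : Set R3))
    (m : Fin r → (Fin 4 → R3)) (dg : Fin r → ℕ)
    (hmem : ∀ i, m i ∈ syzygyModule a b c d)
    (hhom : ∀ i l, (m i l).IsHomogeneous (dg i))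
    (hspan : Submodule.span R3 (Set.range m) = syzygyModule a b c d)
    (hmin : ∀ r' < r, ¬ ∃ (m' : Fin r' → (Fin 4 → R3)) (dg' : Fin r' → ℕ),
        (∀ i, m' i ∈ syzygyModule a b c d) ∧ (∀ i l, (m' i l).IsHomogeneous (dg' i)) ∧
        Submodule.span R3 (Set.range m') = syzygyModule a b c d)
    (cf : Fin r → R3) (hrel : ∑ i, cf i • m i = 0) : cf = 0 := by
  classical
  by_contra hcf
  -- homogeneous relations of degree e
  have hex : ∃ e : ℕ, ∃ cv : Fin r → R3, ((∑ i, cv i • m i = 0) ∧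
      ∀ i, cv i = 0 ∨ (dg i ≤ e ∧ (cv i).IsHomogeneous (e - dg i))) ∧ cv ≠ 0 := by
    obtain ⟨i0, hi0⟩ : ∃ i, cf i ≠ 0 := by
      by_contra hno; push_neg at hno; exact hcf (funext hno)
    obtain ⟨d0, hd0⟩ := exists_coeff_ne_zero hi0
    set e1 := d0.degree + dg i0 with he1def
    set cg : Fin r → R3 := fun i => if dg i ≤ e1 then homogeneousComponent (e1 - dg i) (cf i) else 0
      with hcgdef
    have hcgi : ∀ i, cg i = if dg i ≤ e1 then homogeneousComponent (e1 - dg i) (cf i) else 0 :=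
      fun i => rfl
    refine ⟨e1, cg, ⟨?_, ?_⟩, ?_⟩
    · funext l
      have h0 := congrFun hrel l
      rw [Finset.sum_apply, Pi.zero_apply] at h0
      rw [Finset.sum_apply, Pi.zero_apply]
      have hterm : ∀ i ∈ univ, (cg i • m i) l
          = homogeneousComponent e1 ((cf i • m i) l) := by
        intro i _
        simp only [Pi.smul_apply, smul_eq_mul, hcgi]
        rw [syz_hc_mul' (hhom i l)]
      rw [Finset.sum_congr rfl hterm, ← map_sum, h0, map_zero]
    · intro i
      rw [hcgi i]
      by_cases hle : dg i ≤ e1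
      · exact Or.inr ⟨hle, by rw [if_pos hle]; exact homogeneousComponent_isHomogeneous _ _⟩
      · exact Or.inl (if_neg hle)
    · intro h0
      have h1 := congrFun h0 i0
      rw [hcgi i0, if_pos (by omega), Pi.zero_apply] at h1
      have h2 : e1 - dg i0 = d0.degree := by omega
      rw [h2] at h1
      have h3 : coeff d0 (homogeneousComponent d0.degree (cf i0)) = coeff d0 (cf i0) := by
        rw [coeff_homogeneousComponent, if_pos rfl]
      rw [h1] at h3
      simp only [coeff_zero] at h3
      exact hd0 h3.symm
  set e0 := Nat.find hex with he0def
  obtain ⟨cv, hcrel, hcne⟩ := Nat.find_spec hex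
  have hminE : ∀ e' < e0, ¬ ∃ cv' : Fin r → R3, ((∑ i, cv' i • m i = 0) ∧
      ∀ i, cv' i = 0 ∨ (dg i ≤ e' ∧ (cv' i).IsHomogeneous (e' - dg i))) ∧ cv' ≠ 0 :=
    fun e' h' => Nat.find_min hex h'
  by_cases hcase : ∃ i, cv i ≠ 0 ∧ dg i = e0
  · -- a unit coefficient: contradict minimality of the generating family
    obtain ⟨i, hci, hdgi⟩ := hcase
    have hhomi : (cv i).IsHomogeneous 0 := by
      have h1 := (hcrel.2 i).resolve_left hci
      exact syz_homog_transport h1.2 (by omega)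
    set k := constantCoeff (cv i) with hkdef
    have hconst : cv i = C k := by
      have h1 := syz_hc_self hhomi
      rw [homogeneousComponent_zero] at h1
      rw [← h1, hkdef, constantCoeff_eq]
    have hk : k ≠ 0 := by
      intro h0
      rw [h0, map_zero] at hconst
      exact hci hconst
    cases r with
    | zero => exact i.elim0
    | succ r' =>
      refine hmin r' (by omega) ⟨fun j => m (i.succAbove j), fun j => dg (i.succAbove j),
        fun j => hmem _, fun j l => hhom _ _, le_antisymm ?_ ?_⟩
      · rw [Submodule.span_le]
        rintro x ⟨j, rfl⟩
        exact hmem _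
      · rw [← hspan, Submodule.span_le]
        rintro x ⟨j, rfl⟩
        by_cases hji : j = i
        · subst hji
          have hsum := Fin.sum_univ_succAbove (fun j' => cv j' • m j') j
          rw [hcrel.1] at hsum
          have h5 : (C k : R3) • m j = -∑ j' : Fin r', cv (j.succAbove j') • m (j.succAbove j') := by
            rw [← hconst]
            exact eq_neg_of_add_eq_zero_left hsum.symm
          have hmi : m j = ∑ j' : Fin r',
              (-(C k⁻¹) * cv (j.succAbove j')) • m (j.succAbove j') := by
            calc m j = ((C k⁻¹ * C k : R3)) • m j := by
                  rw [← map_mul, inv_mul_cancel₀ hk, map_one, one_smul]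
              _ = (C k⁻¹ : R3) • ((C k : R3) • m j) := by rw [smul_smul]
              _ = (C k⁻¹ : R3) • (-∑ j' : Fin r', cv (j.succAbove j') • m (j.succAbove j')) := by
                  rw [h5]
              _ = ∑ j' : Fin r', (-(C k⁻¹) * cv (j.succAbove j')) • m (j.succAbove j') := by
                  rw [smul_neg, Finset.smul_sum, ← Finset.sum_neg_distrib]
                  apply Finset.sum_congr rfl
                  intro j' _
                  rw [smul_smul, ← neg_smul, neg_mul]
          rw [hmi]
          exact Submodule.sum_mem _ fun j' _ =>
            Submodule.smul_mem _ _ (Submodule.subset_span ⟨j', rfl⟩)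
        · obtain ⟨j', hj'⟩ := Fin.exists_succAbove_eq hji
          exact Submodule.subset_span ⟨j', by simp only [hj']⟩
  · -- descent
    push_neg at hcase
    have hlt : ∀ i, cv i ≠ 0 → dg i < e0 := fun i hne =>
      lt_of_le_of_ne ((hcrel.2 i).resolve_left hne).1 (hcase i hne)
    have he1 : 1 ≤ e0 := by
      obtain ⟨i0, hi0⟩ : ∃ i, cv i ≠ 0 := by
        by_contra hno; push_neg at hno; exact hcne (funext hno)
      have := hlt i0 hi0; omega
    have hdec : ∀ i, ∃ α β γ : R3, cv i = X 0 * α + X 1 * β + X 2 * γ ∧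
        (α = 0 ∨ (dg i ≤ e0 - 1 ∧ α.IsHomogeneous (e0 - 1 - dg i))) ∧
        (β = 0 ∨ (dg i ≤ e0 - 1 ∧ β.IsHomogeneous (e0 - 1 - dg i))) ∧
        (γ = 0 ∨ (dg i ≤ e0 - 1 ∧ γ.IsHomogeneous (e0 - 1 - dg i))) := by
      intro i
      by_cases hci : cv i = 0
      · exact ⟨0, 0, 0, by rw [hci]; ring, Or.inl rfl, Or.inl rfl, Or.inl rfl⟩
      · have hilt := hlt i hci
        have hhomi : (cv i).IsHomogeneous (e0 - 1 - dg i + 1) := by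
          have h1 := ((hcrel.2 i).resolve_left hci).2
          exact syz_homog_transport h1 (by omega)
        have hmemm : cv i ∈ Ideal.span ({X 0, X 1, X 2} : Set R3) := by
          have hcc : constantCoeff (cv i) = 0 := by
            rw [constantCoeff_eq]
            exact hhomi.coeff_eq_zero (by rw [map_zero]; omega)
          have h2 := syz_sub_C_mem (cv i)
          rwa [hcc, map_zero, sub_zero] at h2
        obtain ⟨α, β, γ, heq, hα, hβ, hγ⟩ := syz_hom_decomp hhomi hmemm
        exact ⟨α, β, γ, heq, Or.inr ⟨by omega, hα⟩, Or.inr ⟨by omega, hβ⟩,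
          Or.inr ⟨by omega, hγ⟩⟩
    choose αf βf γf hceq hPα hPβ hPγ using hdec
    set Ms := ∑ i, αf i • m i with hMsdef
    set Mt := ∑ i, βf i • m i with hMtdef
    set Mu := ∑ i, γf i • m i with hMudef
    have hMsmem : Ms ∈ syzygyModule a b c d :=
      Submodule.sum_mem _ fun i _ => Submodule.smul_mem _ _ (hmem i)
    have hMtmem : Mt ∈ syzygyModule a b c d :=
      Submodule.sum_mem _ fun i _ => Submodule.smul_mem _ _ (hmem i)
    have hMumem : Mu ∈ syzygyModule a b c d :=
      Submodule.sum_mem _ fun i _ => Submodule.smul_mem _ _ (hmem i)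
    have hkey : (X 0 : R3) • Ms + (X 1 : R3) • Mt + (X 2 : R3) • Mu = 0 := by
      rw [hMsdef, hMtdef, hMudef, Finset.smul_sum, Finset.smul_sum, Finset.smul_sum,
        ← Finset.sum_add_distrib, ← Finset.sum_add_distrib, ← hcrel.1]
      apply Finset.sum_congr rfl
      intro i _
      rw [smul_smul, smul_smul, smul_smul, ← add_smul, ← add_smul, hceq i]
    -- homogeneity of the three combinations
    have hhomvec : ∀ (gf : Fin r → R3),
        (∀ i, gf i = 0 ∨ (dg i ≤ e0 - 1 ∧ (gf i).IsHomogeneous (e0 - 1 - dg i))) →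
        ∀ l, (((∑ i, gf i • m i) : Fin 4 → R3) l).IsHomogeneous (e0 - 1) := by
      intro gf hP l
      rw [Finset.sum_apply, ← mem_homogeneousSubmodule]
      apply Submodule.sum_mem
      intro i _
      rw [mem_homogeneousSubmodule]
      rcases hP i with h0 | ⟨hle, hh⟩
      · simp only [Pi.smul_apply, smul_eq_mul, h0, zero_mul]
        exact isHomogeneous_zero _ _ _
      · simp only [Pi.smul_apply, smul_eq_mul]
        exact syz_homog_transport (hh.mul (hhom i l)) (by omega)
    have hstep : (X 2 : R3) • Mu = (X 0 : R3) • (-Ms) + (X 1 : R3) • (-Mt) := by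
      funext l
      have h1 := congrFun hkey l
      simp only [Pi.add_apply, Pi.smul_apply, Pi.neg_apply, Pi.zero_apply, smul_eq_mul,
        mul_neg] at h1 ⊢
      linear_combination h1
    obtain ⟨A, hAmem, B, hBmem, hMuAB⟩ :=
      syz_reg3 hsat hMumem (neg_mem hMsmem) (neg_mem hMtmem) hstep
    set A' : Fin 4 → R3 :=
      if 2 ≤ e0 then (fun l => homogeneousComponent (e0 - 2) (A l)) else 0 with hA'def
    set B' : Fin 4 → R3 :=
      if 2 ≤ e0 then (fun l => homogeneousComponent (e0 - 2) (B l)) else 0 with hB'def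
    have hA'mem : A' ∈ syzygyModule a b c d := by
      rw [hA'def]
      by_cases h2 : 2 ≤ e0
      · rw [if_pos h2]; exact syz_hcVec_mem hha hhb hhc hhd hAmem _
      · rw [if_neg h2]; exact zero_mem _
    have hB'mem : B' ∈ syzygyModule a b c d := by
      rw [hB'def]
      by_cases h2 : 2 ≤ e0
      · rw [if_pos h2]; exact syz_hcVec_mem hha hhb hhc hhd hBmem _
      · rw [if_neg h2]; exact zero_mem _
    have hMu_eq : Mu = (X 0 : R3) • A' + (X 1 : R3) • B' := by
      by_cases h2 : 2 ≤ e0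
      · funext l
        have hMul : Mu l = homogeneousComponent (e0 - 1) (Mu l) :=
          (syz_hc_self (hhomvec γf hPγ l)).symm
        have hABl := congrFun hMuAB l
        simp only [Pi.add_apply, Pi.smul_apply, smul_eq_mul] at hABl
        rw [Pi.add_apply, Pi.smul_apply, Pi.smul_apply, smul_eq_mul, smul_eq_mul,
          hA'def, hB'def, if_pos h2, if_pos h2]
        rw [hMul, hABl, map_add, mul_comm (X 0 : R3) (A l), mul_comm (X 1 : R3) (B l),
          syz_hc_mul' (isHomogeneous_X ℂ 0), syz_hc_mul' (isHomogeneous_X ℂ 1),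
          if_pos (by omega : 1 ≤ e0 - 1), if_pos (by omega : 1 ≤ e0 - 1)]
        have hee : e0 - 1 - 1 = e0 - 2 := by omega
        rw [hee]; ring
      · have he01 : e0 = 1 := by omega
        have hMu0 : Mu = 0 := by
          funext l
          have hMul : Mu l = homogeneousComponent (e0 - 1) (Mu l) :=
            (syz_hc_self (hhomvec γf hPγ l)).symm
          have hABl := congrFun hMuAB l
          simp only [Pi.add_apply, Pi.smul_apply, smul_eq_mul] at hABl
          rw [Pi.zero_apply, hMul, hABl, map_add, mul_comm (X 0 : R3) (A l),
            mul_comm (X 1 : R3) (B l), he01]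
          rw [syz_hc_mul_lt (isHomogeneous_X ℂ 0) (A l) (by omega),
            syz_hc_mul_lt (isHomogeneous_X ℂ 1) (B l) (by omega), add_zero]
        rw [hA'def, hB'def, if_neg h2, if_neg h2, hMu0]
        simp
    have hT1 : (X 1 : R3) • (Mt + (X 2 : R3) • B') = (X 0 : R3) • (-(Ms + (X 2 : R3) • A')) := by
      funext l
      have h1 := congrFun hkey l
      have h2 := congrFun hMu_eq l
      simp only [Pi.add_apply, Pi.smul_apply, Pi.neg_apply, Pi.zero_apply, smul_eq_mul,
        mul_neg] at h1 h2 ⊢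
      linear_combination h1 - X 2 * h2
    have hMtB'mem : Mt + (X 2 : R3) • B' ∈ syzygyModule a b c d :=
      add_mem hMtmem (Submodule.smul_mem _ _ hB'mem)
    obtain ⟨Cv, hCvmem, hCveq⟩ := syz_reg2 (show (1 : Fin 3) ≠ 0 by decide) hMtB'mem hT1
    set C' : Fin 4 → R3 :=
      if 2 ≤ e0 then (fun l => homogeneousComponent (e0 - 2) (Cv l)) else 0 with hC'def
    have hC'mem : C' ∈ syzygyModule a b c d := by
      rw [hC'def]
      by_cases h2 : 2 ≤ e0
      · rw [if_pos h2]; exact syz_hcVec_mem hha hhb hhc hhd hCvmem _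
      · rw [if_neg h2]; exact zero_mem _
    have hMt_eq : Mt + (X 2 : R3) • B' = (X 0 : R3) • C' := by
      by_cases h2 : 2 ≤ e0
      · funext l
        have hMtl : (Mt + (X 2 : R3) • B') l
            = homogeneousComponent (e0 - 1) ((Mt + (X 2 : R3) • B') l) := by
          rw [Pi.add_apply, Pi.smul_apply, smul_eq_mul]
          have hMtl2 : (Mt l).IsHomogeneous (e0 - 1) := hhomvec βf hPβ l
          have hB'l : (X 2 * B' l).IsHomogeneous (e0 - 1) := by
            rw [hB'def, if_pos h2, mul_comm]
            exact syz_homog_transport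
              ((homogeneousComponent_isHomogeneous _ _).mul (isHomogeneous_X ℂ 2)) (by omega)
          exact (syz_hc_self (hMtl2.add hB'l)).symm
        have hCl := congrFun hCveq l
        simp only [Pi.add_apply, Pi.smul_apply, smul_eq_mul] at hCl
        rw [Pi.smul_apply, smul_eq_mul, hC'def, if_pos h2]
        rw [hMtl]
        rw [Pi.add_apply, Pi.smul_apply, smul_eq_mul] at *
        rw [hCl, mul_comm (X 0 : R3) (Cv l), syz_hc_mul' (isHomogeneous_X ℂ 0),
          if_pos (by omega : 1 ≤ e0 - 1)]
        have hee : e0 - 1 - 1 = e0 - 2 := by omega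
        rw [hee]; ring
      · have he01 : e0 = 1 := by omega
        have hB'0 : B' = 0 := by rw [hB'def, if_neg h2]
        have hMt0 : Mt = 0 := by
          funext l
          have hMtl : Mt l = homogeneousComponent (e0 - 1) (Mt l) :=
            (syz_hc_self (hhomvec βf hPβ l)).symm
          have hCl := congrFun hCveq l
          rw [hB'0] at hCl
          simp only [Pi.add_apply, Pi.smul_apply, Pi.zero_apply, smul_eq_mul, mul_zero,
            add_zero] at hCl
          rw [Pi.zero_apply, hMtl, hCl, mul_comm (X 0 : R3) (Cv l), he01]
          exact syz_hc_mul_lt (isHomogeneous_X ℂ 0) (Cv l) (by omega)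
        rw [hC'def, if_neg h2, hB'0, hMt0]
        simp
    have hT2 : Ms + (X 2 : R3) • A' + (X 1 : R3) • C' = 0 := by
      funext l
      have h1 := congrFun hkey l
      have h2 := congrFun hMu_eq l
      have h3 := congrFun hMt_eq l
      simp only [Pi.add_apply, Pi.smul_apply, Pi.zero_apply, smul_eq_mul] at h1 h2 h3 ⊢
      have h4 : X 0 * (Ms l + X 2 * A' l + X 1 * C' l) = X 0 * 0 := by
        linear_combination h1 - X 2 * h2 - X 1 * h3
      exact mul_left_cancel₀ (X_ne_zero 0) h4
    -- representations with homogeneous coefficients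
    have hrepr : ∀ V : Fin 4 → R3, V ∈ syzygyModule a b c d →
        ∃ f : Fin r → R3, ∑ i, f i • m i = V := by
      intro V hV
      rw [← hspan] at hV
      exact (Submodule.mem_span_range_iff_exists_fun R3).mp hV
    obtain ⟨fA, hfA⟩ := hrepr A' hA'mem
    obtain ⟨fB, hfB⟩ := hrepr B' hB'mem
    obtain ⟨fC, hfC⟩ := hrepr C' hC'mem
    have hcomps : ∀ (V : Fin 4 → R3) (fV gV : Fin r → R3), (∑ i, fV i • m i = V) →
        (∀ i, gV i = if 2 ≤ e0 ∧ dg i ≤ e0 - 2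
          then homogeneousComponent (e0 - 2 - dg i) (fV i) else 0) →
        (2 ≤ e0 → ∀ l, homogeneousComponent (e0 - 2) (V l) = V l) →
        (¬ 2 ≤ e0 → V = 0) →
        V = ∑ i, gV i • m i := by
      intro V fV gV hfV hgV hself hzero
      by_cases h2 : 2 ≤ e0
      · funext l
        rw [Finset.sum_apply, ← hself h2 l]
        conv_lhs => rw [← hfV]
        rw [Finset.sum_apply, map_sum]
        apply Finset.sum_congr rfl
        intro i _
        simp only [Pi.smul_apply, smul_eq_mul]
        rw [syz_hc_mul' (hhom i l), hgV i]
        by_cases hdg : dg i ≤ e0 - 2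
        · rw [if_pos hdg, if_pos ⟨h2, hdg⟩]
        · rw [if_neg hdg, if_neg (by tauto), zero_mul]
      · rw [hzero h2]
        symm
        apply Finset.sum_eq_zero
        intro i _
        rw [hgV i, if_neg (by tauto), zero_smul]
    set aa : Fin r → R3 := fun i => if 2 ≤ e0 ∧ dg i ≤ e0 - 2
        then homogeneousComponent (e0 - 2 - dg i) (fA i) else 0 with haadef
    set bb : Fin r → R3 := fun i => if 2 ≤ e0 ∧ dg i ≤ e0 - 2
        then homogeneousComponent (e0 - 2 - dg i) (fB i) else 0 with hbbdef
    set cc : Fin r → R3 := fun i => if 2 ≤ e0 ∧ dg i ≤ e0 - 2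
        then homogeneousComponent (e0 - 2 - dg i) (fC i) else 0 with hccdef
    have haai : ∀ i, aa i = if 2 ≤ e0 ∧ dg i ≤ e0 - 2
        then homogeneousComponent (e0 - 2 - dg i) (fA i) else 0 := fun i => rfl
    have hbbi : ∀ i, bb i = if 2 ≤ e0 ∧ dg i ≤ e0 - 2
        then homogeneousComponent (e0 - 2 - dg i) (fB i) else 0 := fun i => rfl
    have hcci : ∀ i, cc i = if 2 ≤ e0 ∧ dg i ≤ e0 - 2
        then homogeneousComponent (e0 - 2 - dg i) (fC i) else 0 := fun i => rfl
    have hself2 : ∀ (V : Fin 4 → R3), (2 ≤ e0 → (∀ l, (V l).IsHomogeneous (e0 - 2))) →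
        (2 ≤ e0 → ∀ l, homogeneousComponent (e0 - 2) (V l) = V l) := by
      intro V hV h2 l
      exact syz_hc_self (hV h2 l)
    have hA'rep : A' = ∑ i, aa i • m i := by
      refine hcomps A' fA aa hfA haai (hself2 A' ?_) ?_
      · intro h2 l
        rw [hA'def, if_pos h2]
        exact homogeneousComponent_isHomogeneous _ _
      · intro h2; rw [hA'def, if_neg h2]
    have hB'rep : B' = ∑ i, bb i • m i := by
      refine hcomps B' fB bb hfB hbbi (hself2 B' ?_) ?_
      · intro h2 l
        rw [hB'def, if_pos h2]
        exact homogeneousComponent_isHomogeneous _ _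
      · intro h2; rw [hB'def, if_neg h2]
    have hC'rep : C' = ∑ i, cc i • m i := by
      refine hcomps C' fC cc hfC hcci (hself2 C' ?_) ?_
      · intro h2 l
        rw [hC'def, if_pos h2]
        exact homogeneousComponent_isHomogeneous _ _
      · intro h2; rw [hC'def, if_neg h2]
    have haaP : ∀ i, aa i = 0 ∨ (2 ≤ e0 ∧ dg i ≤ e0 - 2 ∧ (aa i).IsHomogeneous (e0 - 2 - dg i)) := by
      intro i
      rw [haai i]
      by_cases h2 : 2 ≤ e0 ∧ dg i ≤ e0 - 2
      · exact Or.inr ⟨h2.1, h2.2, by rw [if_pos h2]; exact homogeneousComponent_isHomogeneous _ _⟩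
      · exact Or.inl (if_neg h2)
    have hbbP : ∀ i, bb i = 0 ∨ (2 ≤ e0 ∧ dg i ≤ e0 - 2 ∧ (bb i).IsHomogeneous (e0 - 2 - dg i)) := by
      intro i
      rw [hbbi i]
      by_cases h2 : 2 ≤ e0 ∧ dg i ≤ e0 - 2
      · exact Or.inr ⟨h2.1, h2.2, by rw [if_pos h2]; exact homogeneousComponent_isHomogeneous _ _⟩
      · exact Or.inl (if_neg h2)
    have hccP : ∀ i, cc i = 0 ∨ (2 ≤ e0 ∧ dg i ≤ e0 - 2 ∧ (cc i).IsHomogeneous (e0 - 2 - dg i)) := by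
      intro i
      rw [hcci i]
      by_cases h2 : 2 ≤ e0 ∧ dg i ≤ e0 - 2
      · exact Or.inr ⟨h2.1, h2.2, by rw [if_pos h2]; exact homogeneousComponent_isHomogeneous _ _⟩
      · exact Or.inl (if_neg h2)
    -- new relation coefficients
    set cv1 : Fin r → R3 := fun i => αf i + X 2 * aa i + X 1 * cc i with hcv1def
    set cv2 : Fin r → R3 := fun i => βf i + X 2 * bb i - X 0 * cc i with hcv2def
    set cv3 : Fin r → R3 := fun i => γf i - X 0 * aa i - X 1 * bb i with hcv3def
    have hcv1i : ∀ i, cv1 i = αf i + X 2 * aa i + X 1 * cc i := fun i => rfl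
    have hcv2i : ∀ i, cv2 i = βf i + X 2 * bb i - X 0 * cc i := fun i => rfl
    have hcv3i : ∀ i, cv3 i = γf i - X 0 * aa i - X 1 * bb i := fun i => rfl
    have hrel1 : ∑ i, cv1 i • m i = 0 := by
      have hs : ∑ i, cv1 i • m i = Ms + (X 2 : R3) • A' + (X 1 : R3) • C' := by
        rw [hMsdef, hA'rep, hC'rep, Finset.smul_sum, Finset.smul_sum,
          ← Finset.sum_add_distrib, ← Finset.sum_add_distrib]
        apply Finset.sum_congr rfl
        intro i _
        rw [hcv1i i, smul_smul, smul_smul, ← add_smul, ← add_smul]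
      rw [hs, hT2]
    have hrel2 : ∑ i, cv2 i • m i = 0 := by
      have hs : ∑ i, cv2 i • m i = Mt + (X 2 : R3) • B' - (X 0 : R3) • C' := by
        rw [hMtdef, hB'rep, hC'rep, Finset.smul_sum, Finset.smul_sum,
          ← Finset.sum_add_distrib, ← Finset.sum_sub_distrib]
        apply Finset.sum_congr rfl
        intro i _
        rw [hcv2i i, smul_smul, smul_smul, ← add_smul, ← sub_smul]
      rw [hs, hMt_eq, sub_self]
    have hrel3 : ∑ i, cv3 i • m i = 0 := by
      have hs : ∑ i, cv3 i • m i = Mu - (X 0 : R3) • A' - (X 1 : R3) • B' := by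
        rw [hMudef, hA'rep, hB'rep, Finset.smul_sum, Finset.smul_sum,
          ← Finset.sum_sub_distrib, ← Finset.sum_sub_distrib]
        apply Finset.sum_congr rfl
        intro i _
        rw [hcv3i i, smul_smul, smul_smul, ← sub_smul, ← sub_smul]
      rw [hs, hMu_eq]
      abel
    -- homogeneity of new coefficients
    have hPZadd : ∀ (i : Fin r) (x y : R3),
        (x = 0 ∨ (dg i ≤ e0 - 1 ∧ x.IsHomogeneous (e0 - 1 - dg i))) →
        (y = 0 ∨ (dg i ≤ e0 - 1 ∧ y.IsHomogeneous (e0 - 1 - dg i))) →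
        (x + y = 0 ∨ (dg i ≤ e0 - 1 ∧ (x + y).IsHomogeneous (e0 - 1 - dg i))) := by
      rintro i x y (rfl | ⟨h1, h2⟩) (rfl | ⟨h3, h4⟩)
      · left; simp
      · right; exact ⟨h3, by simpa using h4⟩
      · right; exact ⟨h1, by simpa using h2⟩
      · right; exact ⟨h1, h2.add h4⟩
    have hPZmulX : ∀ (i : Fin r) (j : Fin 3) (x : R3),
        (x = 0 ∨ (2 ≤ e0 ∧ dg i ≤ e0 - 2 ∧ x.IsHomogeneous (e0 - 2 - dg i))) →
        ((X j : R3) * x = 0 ∨ (dg i ≤ e0 - 1 ∧ ((X j : R3) * x).IsHomogeneous (e0 - 1 - dg i))) := by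
      rintro i j x (rfl | ⟨h0, h1, h2⟩)
      · left; ring
      · right
        refine ⟨by omega, ?_⟩
        rw [mul_comm]
        exact syz_homog_transport (h2.mul (isHomogeneous_X ℂ j)) (by omega)
    have hPZneg : ∀ (i : Fin r) (x : R3),
        (x = 0 ∨ (dg i ≤ e0 - 1 ∧ x.IsHomogeneous (e0 - 1 - dg i))) →
        (-x = 0 ∨ (dg i ≤ e0 - 1 ∧ (-x).IsHomogeneous (e0 - 1 - dg i))) := by
      rintro i x (rfl | ⟨h1, h2⟩)
      · left; simp
      · right; exact ⟨h1, h2.neg⟩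
    have hP1 : ∀ i, cv1 i = 0 ∨ (dg i ≤ e0 - 1 ∧ (cv1 i).IsHomogeneous (e0 - 1 - dg i)) := by
      intro i
      rw [hcv1i i]
      exact hPZadd i _ _ (hPZadd i _ _ (hPα i) (hPZmulX i 2 _ (haaP i))) (hPZmulX i 1 _ (hccP i))
    have hP2 : ∀ i, cv2 i = 0 ∨ (dg i ≤ e0 - 1 ∧ (cv2 i).IsHomogeneous (e0 - 1 - dg i)) := by
      intro i
      rw [hcv2i i]
      have h := hPZadd i _ _ (hPZadd i _ _ (hPβ i) (hPZmulX i 2 _ (hbbP i)))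
        (hPZneg i _ (hPZmulX i 0 _ (hccP i)))
      rwa [← sub_eq_add_neg] at h
    have hP3 : ∀ i, cv3 i = 0 ∨ (dg i ≤ e0 - 1 ∧ (cv3 i).IsHomogeneous (e0 - 1 - dg i)) := by
      intro i
      rw [hcv3i i]
      have h := hPZadd i _ _ (hPZadd i _ _ (hPγ i) (hPZneg i _ (hPZmulX i 0 _ (haaP i))))
        (hPZneg i _ (hPZmulX i 1 _ (hbbP i)))
      rwa [← sub_eq_add_neg, ← sub_eq_add_neg] at h
    have hnz : ¬(cv1 = 0 ∧ cv2 = 0 ∧ cv3 = 0) := by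
      rintro ⟨h1, h2, h3⟩
      apply hcne
      funext i
      have e1 := congrFun h1 i
      have e2 := congrFun h2 i
      have e3 := congrFun h3 i
      rw [Pi.zero_apply] at e1 e2 e3 ⊢
      have hid : cv i = X 0 * cv1 i + X 1 * cv2 i + X 2 * cv3 i := by
        rw [hcv1i i, hcv2i i, hcv3i i, hceq i]; ring
      rw [hid, e1, e2, e3]; ring
    have hgetrel : ∀ cnew : Fin r → R3, (∑ i, cnew i • m i = 0) →
        (∀ i, cnew i = 0 ∨ (dg i ≤ e0 - 1 ∧ (cnew i).IsHomogeneous (e0 - 1 - dg i))) →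
        cnew ≠ 0 → False := by
      intro cnew h1 h2 h3
      exact hminE (e0 - 1) (by omega) ⟨cnew, ⟨h1, h2⟩, h3⟩
    by_cases hz1 : cv1 = 0
    · by_cases hz2 : cv2 = 0
      · exact hgetrel cv3 hrel3 hP3 (fun h => hnz ⟨hz1, hz2, h⟩)
      · exact hgetrel cv2 hrel2 hP2 hz2
    · exact hgetrel cv1 hrel1 hP1 hz1

lemma syz_exists_hom_gen {n : ℕ} {a b c d : R3}
    (hha : a.IsHomogeneous n) (hhb : b.IsHomogeneous n)
    (hhc : c.IsHomogeneous n) (hhd : d.IsHomogeneous n) :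
    ∃ (r : ℕ) (m : Fin r → (Fin 4 → R3)) (dg : Fin r → ℕ),
      (∀ i, m i ∈ syzygyModule a b c d) ∧ (∀ i l, (m i l).IsHomogeneous (dg i)) ∧
      Submodule.span R3 (Set.range m) = syzygyModule a b c d := by
  classical
  obtain ⟨S, hS⟩ := IsNoetherian.noetherian (syzygyModule a b c d)
  set N := S.sup (fun g => Finset.univ.sup (fun l => (g l).totalDegree)) with hN
  set ι := ({x // x ∈ S} × Fin (N + 1)) with hι
  set m0 : ι → (Fin 4 → R3) :=
    fun p => fun l => homogeneousComponent (p.2 : ℕ) ((p.1 : Fin 4 → R3) l) with hm0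
  have hmem0 : ∀ p : ι, m0 p ∈ syzygyModule a b c d := fun p =>
    syz_hcVec_mem hha hhb hhc hhd
      (by rw [← hS]; exact Submodule.subset_span p.1.2) (p.2 : ℕ)
  have hspan0 : Submodule.span R3 (Set.range m0) = syzygyModule a b c d := by
    apply le_antisymm
    · rw [Submodule.span_le]
      rintro x ⟨p, rfl⟩
      exact hmem0 p
    · rw [← hS, Submodule.span_le]
      intro g hg
      have hsumg : g = ∑ w ∈ range (N + 1), (fun l => homogeneousComponent w (g l)) := by
        funext l
        rw [Finset.sum_apply]
        have hb1 : (g l).totalDegree ≤ Finset.univ.sup (fun l => (g l).totalDegree) :=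
          Finset.le_sup (f := fun l : Fin 4 => (g l).totalDegree) (Finset.mem_univ l)
        have hb2 : Finset.univ.sup (fun l => (g l).totalDegree) ≤ N :=
          Finset.le_sup (f := fun g : Fin 4 → R3 => Finset.univ.sup fun l => (g l).totalDegree)
            (Finset.mem_coe.mp hg)
        exact (syz_sum_hc (le_trans hb1 hb2)).symm
      rw [hsumg]
      apply Submodule.sum_mem
      intro w hw
      exact Submodule.subset_span ⟨(⟨g, hg⟩, ⟨w, Finset.mem_range.mp hw⟩), rfl⟩
  have : Fintype ι := by infer_instance
  set E := Fintype.equivFin ι with hE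
  refine ⟨Fintype.card ι, m0 ∘ E.symm, (fun p : ι => (p.2 : ℕ)) ∘ E.symm,
    fun i => hmem0 _, fun i l => homogeneousComponent_isHomogeneous _ _, ?_⟩
  rw [Set.range_comp, E.symm.surjective.range_eq, Set.image_univ]
  exact hspan0

lemma syz_free_of_saturated {n : ℕ} {a b c d : R3}
    (hha : a.IsHomogeneous n) (hhb : b.IsHomogeneous n)
    (hhc : c.IsHomogeneous n) (hhd : d.IsHomogeneous n)
    (hsat : (Ideal.span ({a, b, c, d} : Set R3)).colon
        (Ideal.span ({X 0, X 1, X 2} : Set R3)) = Ideal.span ({a, b, c, d} : Set R3)) :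
    Module.Free R3 (syzygyModule a b c d) := by
  classical
  have hex0 := syz_exists_hom_gen hha hhb hhc hhd
  set P : ℕ → Prop := fun r => ∃ (m : Fin r → (Fin 4 → R3)) (dg : Fin r → ℕ),
      (∀ i, m i ∈ syzygyModule a b c d) ∧ (∀ i l, (m i l).IsHomogeneous (dg i)) ∧
      Submodule.span R3 (Set.range m) = syzygyModule a b c d with hP
  have hex : ∃ r, P r := hex0
  set r0 := Nat.find hex with hr0
  obtain ⟨m, dg, hmem, hhom, hspan⟩ : P r0 := Nat.find_spec hex
  have hmin : ∀ r' < r0, ¬ P r' := fun r' h' => Nat.find_min hex h'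
  have hindep := syz_no_relation hha hhb hhc hhd hsat m dg hmem hhom hspan hmin
  set em : Fin r0 → (syzygyModule a b c d) := fun i => ⟨m i, hmem i⟩ with hem
  have hli : LinearIndependent R3 em := by
    rw [Fintype.linearIndependent_iff]
    intro g hg
    have hg2 : ∑ i, g i • m i = 0 := by
      have := congrArg ((syzygyModule a b c d).subtype) hg
      rw [map_sum, map_zero] at this
      simpa [hem] using this
    intro i
    have := hindep g hg2
    exact congrFun this i
  have hsp : ⊤ ≤ Submodule.span R3 (Set.range em) := by
    intro x _
    have hx : (x : Fin 4 → R3) ∈ Submodule.span R3 (Set.range m) := by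
      rw [hspan]; exact x.2
    obtain ⟨cf, hcf⟩ := (Submodule.mem_span_range_iff_exists_fun R3).mp hx
    apply (Submodule.mem_span_range_iff_exists_fun R3).mpr
    refine ⟨cf, ?_⟩
    apply Subtype.ext
    have hcoe : ((∑ i, cf i • em i : syzygyModule a b c d) : Fin 4 → R3) = ∑ i, cf i • m i := by
      have := map_sum ((syzygyModule a b c d).subtype) (fun i => cf i • em i) Finset.univ
      simpa [hem] using this
    rw [hcoe, hcf]
  exact Module.Free.of_basis (Module.Basis.mk hli hsp)

set_option maxHeartbeats 1000000 in
set_option synthInstance.maxHeartbeats 400000 in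
lemma syz_saturated_of_free {a b c d : R3}
    (hfree : Module.Free R3 (syzygyModule a b c d)) :
    (Ideal.span ({a, b, c, d} : Set R3)).colon (Ideal.span ({X 0, X 1, X 2} : Set R3))
      = Ideal.span ({a, b, c, d} : Set R3) := by
  classical
  apply le_antisymm
  · intro x hx
    have hx0 : x * X 0 ∈ Ideal.span ({a, b, c, d} : Set R3) :=
      Submodule.mem_colon.mp hx (X 0) (Ideal.subset_span (by simp))
    have hx1 : x * X 1 ∈ Ideal.span ({a, b, c, d} : Set R3) :=
      Submodule.mem_colon.mp hx (X 1) (Ideal.subset_span (by simp))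
    have hx2 : x * X 2 ∈ Ideal.span ({a, b, c, d} : Set R3) :=
      Submodule.mem_colon.mp hx (X 2) (Ideal.subset_span (by simp))
    obtain ⟨Aa, hAa⟩ := syz_mem_span4.mp hx0
    obtain ⟨Bb, hBb⟩ := syz_mem_span4.mp hx1
    obtain ⟨Cc, hCc⟩ := syz_mem_span4.mp hx2
    set σ1 : Fin 4 → R3 := (X 1 : R3) • Aa - (X 0 : R3) • Bb with hσ1def
    set σ2 : Fin 4 → R3 := (X 2 : R3) • Aa - (X 0 : R3) • Cc with hσ2def
    set σ3 : Fin 4 → R3 := (X 2 : R3) • Bb - (X 1 : R3) • Cc with hσ3def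
    have hσ1 : σ1 ∈ syzygyModule a b c d := by
      rw [syz_mem_iff]
      simp only [hσ1def, syzDot, Pi.sub_apply, Pi.smul_apply, smul_eq_mul]
      linear_combination X 1 * hAa - X 0 * hBb
    have hσ2 : σ2 ∈ syzygyModule a b c d := by
      rw [syz_mem_iff]
      simp only [hσ2def, syzDot, Pi.sub_apply, Pi.smul_apply, smul_eq_mul]
      linear_combination X 2 * hAa - X 0 * hCc
    have hσ3 : σ3 ∈ syzygyModule a b c d := by
      rw [syz_mem_iff]
      simp only [hσ3def, syzDot, Pi.sub_apply, Pi.smul_apply, smul_eq_mul]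
      linear_combination X 2 * hBb - X 1 * hCc
    obtain ⟨⟨ι, bs⟩⟩ := hfree.exists_basis
    set s1 : syzygyModule a b c d := ⟨σ1, hσ1⟩ with hs1def
    set s2 : syzygyModule a b c d := ⟨σ2, hσ2⟩ with hs2def
    set s3 : syzygyModule a b c d := ⟨σ3, hσ3⟩ with hs3def
    have hkos : (X 2 : R3) • s1 - (X 1 : R3) • s2 + (X 0 : R3) • s3 = 0 := by
      apply Subtype.ext
      show (X 2 : R3) • σ1 - (X 1 : R3) • σ2 + (X 0 : R3) • σ3 = 0
      funext l
      simp only [hσ1def, hσ2def, hσ3def, Pi.add_apply, Pi.sub_apply, Pi.smul_apply,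
        Pi.zero_apply, smul_eq_mul]
      ring
    set F := bs.repr s1 with hF
    set G := bs.repr s2 with hG
    set H := bs.repr s3 with hH
    have hcoord : ∀ j, X 2 * F j = X 1 * G j - X 0 * H j := by
      intro j
      have h1 : bs.repr ((X 2 : R3) • s1 - (X 1 : R3) • s2 + (X 0 : R3) • s3) = 0 := by
        rw [hkos, map_zero]
      rw [map_add, map_sub, map_smul, map_smul, map_smul] at h1
      have h2 := congrArg (fun z : ι →₀ R3 => z j) h1
      simp only [Finsupp.add_apply, Finsupp.sub_apply, Finsupp.smul_apply, smul_eq_mul,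
        Finsupp.coe_zero, Pi.zero_apply] at h2
      rw [← hF, ← hG, ← hH] at h2
      linear_combination h2
    have hchoice : ∀ j, ∃ p q rr : R3, F j = X 1 * p + X 0 * q ∧ G j = X 2 * p + X 0 * rr ∧
        H j = X 1 * rr - X 2 * q := fun j => syz_koszul3 (hcoord j)
    choose pf qf rf hpF hpG hpH using hchoice
    set S : Finset ι := F.support ∪ G.support ∪ H.support with hS
    set Pel : syzygyModule a b c d := ∑ j ∈ S, pf j • bs j with hPel
    set Qel : syzygyModule a b c d := ∑ j ∈ S, qf j • bs j with hQel
    have hreprsum : ∀ (cf : ι → R3) (j : ι),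
        bs.repr (∑ j' ∈ S, cf j' • bs j') j = if j ∈ S then cf j else 0 := by
      intro cf j
      rw [map_sum]
      have : ∀ j' ∈ S, (bs.repr (cf j' • bs j')) j
          = if j = j' then cf j' else 0 := by
        intro j' _
        rw [map_smul, bs.repr_self, Finsupp.smul_apply, Finsupp.single_apply]
        by_cases hjj : j' = j
        · rw [if_pos hjj, if_pos hjj.symm, smul_eq_mul, mul_one]
        · rw [if_neg hjj, if_neg (Ne.symm hjj), smul_eq_mul, mul_zero]
      rw [Finsupp.finset_sum_apply, Finset.sum_congr rfl this, Finset.sum_ite_eq S j cf]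
    have hrepr : s1 = (X 1 : R3) • Pel + (X 0 : R3) • Qel := by
      apply bs.repr.injective
      rw [map_add, map_smul, map_smul]
      refine Finsupp.ext fun j => ?_
      rw [Finsupp.add_apply, Finsupp.smul_apply, Finsupp.smul_apply, smul_eq_mul, smul_eq_mul]
      rw [hPel, hQel, hreprsum pf j, hreprsum qf j]
      by_cases hj : j ∈ S
      · rw [if_pos hj, if_pos hj, ← hF]
        exact hpF j
      · rw [if_neg hj, if_neg hj, ← hF]
        have hF0 : F j = 0 := by
          by_contra hne
          exact hj (Finset.mem_union_left _ (Finset.mem_union_left _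
            (Finsupp.mem_support_iff.mpr hne)))
        rw [hF0]; ring
    have hvec : σ1 = (X 1 : R3) • (Pel : Fin 4 → R3) + (X 0 : R3) • (Qel : Fin 4 → R3) := by
      have h2 := congrArg (Subtype.val) hrepr
      rw [Submodule.coe_add, SetLike.val_smul, SetLike.val_smul] at h2
      exact h2
    have hdiv : ∀ l, ∃ w, Aa l = (Pel : Fin 4 → R3) l + X 0 * w := by
      intro l
      have h1 := congrFun hvec l
      simp only [hσ1def, Pi.add_apply, Pi.sub_apply, Pi.smul_apply, smul_eq_mul] at h1
      have h2 : X 1 * (Aa l - (Pel : Fin 4 → R3) l)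
          = X 0 * (Bb l + (Qel : Fin 4 → R3) l) := by linear_combination h1
      obtain ⟨w, hw, _⟩ := syz_koszul2 (show (1 : Fin 3) ≠ 0 by decide) h2
      exact ⟨w, by linear_combination hw⟩
    choose Ew hEw using hdiv
    have hAa2 : x * X 0 = X 0 * syzDot a b c d Ew := by
      have hdot : syzDot a b c d Aa
          = syzDot a b c d (Pel : Fin 4 → R3) + X 0 * syzDot a b c d Ew := by
        simp only [syzDot]
        rw [hEw 0, hEw 1, hEw 2, hEw 3]
        ring
      have hPz : syzDot a b c d (Pel : Fin 4 → R3) = 0 := (syz_mem_iff a b c d).mp Pel.2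
      rw [← hAa]
      rw [show syzDot a b c d Aa = Aa 0 * a + Aa 1 * b + Aa 2 * c + Aa 3 * d from rfl] at hdot
      rw [hdot, hPz, zero_add]
    have hxE : x = syzDot a b c d Ew := by
      have h3 : X 0 * x = X 0 * syzDot a b c d Ew := by linear_combination hAa2
      exact mul_left_cancel₀ (X_ne_zero 0) h3
    rw [hxE]
    exact syz_mem_span4.mpr ⟨Ew, rfl⟩
  · intro y hy
    rw [Submodule.mem_colon]
    intro p _
    rw [smul_eq_mul, mul_comm]
    exact Ideal.mul_mem_left _ _ hy

lemma syz_ass_iff_sat {a b c d : R3} :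
    (¬ ∃ x : R3, (Ideal.span {X 0, X 1, X 2} : Ideal R3) =
        (Ideal.span {a, b, c, d}).colon (Ideal.span {x})) ↔
      (Ideal.span ({a, b, c, d} : Set R3)).colon (Ideal.span ({X 0, X 1, X 2} : Set R3))
        = Ideal.span ({a, b, c, d} : Set R3) := by
  constructor
  · intro hno
    by_contra hne
    have hsub : Ideal.span ({a, b, c, d} : Set R3) ≤
        (Ideal.span ({a, b, c, d} : Set R3)).colon (Ideal.span ({X 0, X 1, X 2} : Set R3)) := by
      intro y hy
      rw [Submodule.mem_colon]
      intro p _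
      rw [smul_eq_mul, mul_comm]
      exact Ideal.mul_mem_left _ _ hy
    have hlt : Ideal.span ({a, b, c, d} : Set R3) <
        (Ideal.span ({a, b, c, d} : Set R3)).colon (Ideal.span ({X 0, X 1, X 2} : Set R3)) :=
      lt_of_le_of_ne hsub (fun h => hne h.symm)
    obtain ⟨x, hxc, hxI⟩ := SetLike.exists_of_lt hlt
    apply hno
    refine ⟨x, (le_antisymm ?_ ?_).symm⟩
    · intro f hf
      rw [Ideal.mem_colon_span_singleton] at hf
      have hg : f - C (constantCoeff f) ∈ Ideal.span ({X 0, X 1, X 2} : Set R3) :=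
        syz_sub_C_mem f
      have hgx : (f - C (constantCoeff f)) * x ∈ Ideal.span ({a, b, c, d} : Set R3) := by
        rw [mul_comm]
        exact Submodule.mem_colon.mp hxc _ hg
      have hCx : C (constantCoeff f) * x ∈ Ideal.span ({a, b, c, d} : Set R3) := by
        have : C (constantCoeff f) * x = f * x - (f - C (constantCoeff f)) * x := by ring
        rw [this]
        exact sub_mem hf hgx
      by_cases hk : constantCoeff f = 0
      · have := syz_sub_C_mem f
        rwa [hk, map_zero, sub_zero] at this
      · exfalso
        apply hxI
        have : x = C (constantCoeff f)⁻¹ * (C (constantCoeff f) * x) := by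
          rw [← mul_assoc, ← map_mul, inv_mul_cancel₀ hk, map_one, one_mul]
        rw [this]
        exact Ideal.mul_mem_left _ _ hCx
    · rw [Ideal.span_le]
      rintro y (rfl | rfl | rfl) <;>
        · rw [SetLike.mem_coe, Ideal.mem_colon_span_singleton, mul_comm]
          exact Submodule.mem_colon.mp hxc _ (Ideal.subset_span (by simp))
  · rintro hsat ⟨x, hx⟩
    have hxI : x ∈ Ideal.span ({a, b, c, d} : Set R3) := by
      rw [← hsat]
      apply syz_mem_colon_m
      · rw [mul_comm, ← Ideal.mem_colon_span_singleton, ← hx]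
        exact Ideal.subset_span (by simp)
      · rw [mul_comm, ← Ideal.mem_colon_span_singleton, ← hx]
        exact Ideal.subset_span (by simp)
      · rw [mul_comm, ← Ideal.mem_colon_span_singleton, ← hx]
        exact Ideal.subset_span (by simp)
    have htop : (Ideal.span {X 0, X 1, X 2} : Ideal R3) = ⊤ := by
      rw [hx, eq_top_iff]
      intro f _
      rw [Ideal.mem_colon_span_singleton]
      exact Ideal.mul_mem_left _ _ hxI
    have h1 : (1 : R3) ∈ (Ideal.span {X 0, X 1, X 2} : Ideal R3) := htop ▸ trivial
    have := syz_cc_zero_of_mem h1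
    rw [map_one] at this
    exact one_ne_zero this


/-- For homogeneous `a,b,c,d` of degree `n ≥ 1` with
`gcd(a,b,c,d) = 1` and at least one common zero in `ℂ³∖{0}`, with
`I = ⟨a,b,c,d⟩` and `𝔪 = ⟨s,t,u⟩`, the following are equivalent:
(1) `Syz(a,b,c,d)` is a free `R`-module;
(2) `𝔪` is not the annihilator of any element of `R/I` (i.e. `𝔪` is not an
associated prime of `R/I`);
(3) `I : 𝔪 = I` (i.e. `I` is saturated). -/
theorem syzygy_free_iff_saturated (n : ℕ) (hn : 1 ≤ n)
    (a b c d : MvPolynomial (Fin 3) ℂ)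
    (ha : a.IsHomogeneous n) (hb : b.IsHomogeneous n)
    (hc : c.IsHomogeneous n) (hd : d.IsHomogeneous n)
    (hgcd : ∀ g : MvPolynomial (Fin 3) ℂ, g ∣ a → g ∣ b → g ∣ c → g ∣ d → IsUnit g)
    (hbp : ∃ p : Fin 3 → ℂ, p ≠ 0 ∧
      eval p a = 0 ∧ eval p b = 0 ∧ eval p c = 0 ∧ eval p d = 0) :
    (Module.Free (MvPolynomial (Fin 3) ℂ) (syzygyModule a b c d) ↔
      ¬ ∃ x : MvPolynomial (Fin 3) ℂ,
        (Ideal.span {X 0, X 1, X 2} : Ideal (MvPolynomial (Fin 3) ℂ)) =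
          (Ideal.span {a, b, c, d}).colon (Ideal.span {x})) ∧
    ((¬ ∃ x : MvPolynomial (Fin 3) ℂ,
        (Ideal.span {X 0, X 1, X 2} : Ideal (MvPolynomial (Fin 3) ℂ)) =
          (Ideal.span {a, b, c, d}).colon (Ideal.span {x})) ↔
      (Ideal.span {a, b, c, d}).colon
          (Ideal.span {X 0, X 1, X 2} : Ideal (MvPolynomial (Fin 3) ℂ)) =
        Ideal.span {a, b, c, d}) := by
  have hsat_iff := syz_ass_iff_sat (a := a) (b := b) (c := c) (d := d)
  refine ⟨⟨fun hfree => hsat_iff.mpr (syz_saturated_of_free hfree),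
    fun hno => syz_free_of_saturated ha hb hc hd (hsat_iff.mp hno)⟩, hsat_iff⟩

end SyzProofAll
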